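/- arXiv:2605.27991 — 2 statements merged into one kernel-verified Lean document; each statement's English description precedes it below -/
import Mathlib

section
/- Let H be an n×n symmetric positive semidefinite real matrix, y, f0 ∈ ℝ^n, and t ≥ 0. Then the gradient-flow fitted value f0 + (I − exp(−tH))(y − f0) equals f0 + C_t (C_t + I)^{-1} (y − f0), where C_t = exp(tH) − I; that is, the early-stopped predictor coincides with the best linear unbiased predictor under the working random-effects model with random-effect covariance proportional to exp(tH) − I and noise covariance proportional to I. -/
open Matrix NormedSpace

theorem stmt0 {n : ℕ} (H : Matrix (Fin n) (Fin n) ℝ) (hH : H.PosSemidef)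
    (y f0 : Fin n → ℝ) (t : ℝ) (ht : 0 ≤ t) :
    let C : Matrix (Fin n) (Fin n) ℝ := NormedSpace.exp (t • H) - 1
    f0 + (1 - NormedSpace.exp (-(t • H))).mulVec (y - f0)
      = f0 + (C * (C + 1)⁻¹).mulVec (y - f0) := by
  intro C
  have hC1 : C + 1 = NormedSpace.exp (t • H) := by simp [C]
  have hu : IsUnit (NormedSpace.exp (t • H)) := Matrix.isUnit_exp (t • H)
  have hinv : (C + 1)⁻¹ = NormedSpace.exp (-(t • H)) := by
    rw [hC1, Matrix.exp_neg]
  have hmul : NormedSpace.exp (t • H) * NormedSpace.exp (-(t • H)) = 1 := by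
    rw [Matrix.exp_neg]
    exact Matrix.mul_nonsing_inv _ (Matrix.isUnit_iff_isUnit_det _ |>.mp hu)
  have : C * (C + 1)⁻¹ = 1 - NormedSpace.exp (-(t • H)) := by
    rw [hinv]; simp only [C]; rw [sub_mul, hmul, one_mul]
  rw [this]
end

section
/- Fix α ∈ (0,1). Suppose for each n we have nonnegative reals λ_{1,n}, …, λ_{n,n} with mean λ̄_n > 0, and a sequence δ_n → 0 such that at least ⌈αn⌉ of the λ_{k,n} satisfy λ_{k,n} ≤ δ_n λ̄_n. If t_n ≥ 0 is a sequence with (n^{-1}∑_{k=1}^n exp(−t_n λ_{k,n})) / exp(−t_n λ̄_n) → 1, then t_n λ̄_n → 0. -/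
lemma stmt10_aux_exp (u b : ℝ) (hb : 0 ≤ b) (hub : b / 2 ≤ u) :
    1 + u + b ^ 2 / 16 ≤ Real.exp u := by
  have h5 : u / 2 + 1 ≤ Real.exp (u / 2) := Real.add_one_le_exp _
  have h6 : Real.exp u = Real.exp (u / 2) * Real.exp (u / 2) := by
    rw [← Real.exp_add]; ring_nf
  have hpos5 : (0 : ℝ) ≤ u / 2 + 1 := by linarith
  have h7 : (u / 2 + 1) * (u / 2 + 1) ≤ Real.exp u := by
    rw [h6]; exact mul_le_mul h5 h5 hpos5 (Real.exp_pos _).le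
  have h8 : (b / 2) * (b / 2) ≤ u * u := mul_self_le_mul_self (by linarith) hub
  nlinarith [h7, h8]

open Classical in
theorem stmt10 (α : ℝ) (hα : α ∈ Set.Ioo (0:ℝ) 1)
    (lam : (n : ℕ) → Fin n → ℝ) (hlam : ∀ n k, 0 ≤ lam n k)
    (lbar : ℕ → ℝ) (hlbar : ∀ n : ℕ, lbar n = (n : ℝ)⁻¹ * ∑ k, lam n k)
    (hpos : ∀ n : ℕ, 0 < n → 0 < lbar n)
    (δ : ℕ → ℝ) (hδ : Filter.Tendsto δ Filter.atTop (nhds 0))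
    (hcard : ∀ n : ℕ, Nat.ceil (α * n) ≤
      (Finset.univ.filter fun k => lam n k ≤ δ n * lbar n).card)
    (t : ℕ → ℝ) (ht : ∀ n : ℕ, 0 ≤ t n)
    (hconv : Filter.Tendsto
      (fun n : ℕ => ((n : ℝ)⁻¹ * ∑ k, Real.exp (-(t n * lam n k))) /
        Real.exp (-(t n * lbar n))) Filter.atTop (nhds 1)) :
    Filter.Tendsto (fun n : ℕ => t n * lbar n) Filter.atTop (nhds 0) := by
  obtain ⟨hα0, hα1⟩ := hα
  set a : ℕ → ℝ := fun n => t n * lbar n with ha_def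
  set R : ℕ → ℝ := fun n : ℕ => ((n : ℝ)⁻¹ * ∑ k, Real.exp (-(t n * lam n k))) /
        Real.exp (-(t n * lbar n)) with hR_def
  clear_value a R
  have key : ∀ n : ℕ, 1 ≤ n → δ n ≤ 1/2 →
      0 ≤ a n ∧ 0 ≤ δ n ∧ α * Real.exp (a n / 2) ≤ R n ∧
        1 + α * (a n)^2 / 16 - δ n * a n ≤ R n := by
    intro n hn hδ2
    have hn0 : (0:ℝ) < n := by exact_mod_cast hn
    have hL : 0 < lbar n := hpos n hn
    have ha_n : a n = t n * lbar n := by rw [ha_def]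
    have ha0 : 0 ≤ a n := by rw [ha_n]; exact mul_nonneg (ht n) hL.le
    set S := Finset.univ.filter (fun k : Fin n => lam n k ≤ δ n * lbar n) with hS
    set T := Finset.univ.filter (fun k : Fin n => ¬ lam n k ≤ δ n * lbar n) with hT
    set c := S.card with hc
    have hcn : (c:ℝ) ≤ n := by
      have : c ≤ n := le_trans (Finset.card_filter_le _ _) (by simp)
      exact_mod_cast this
    have hαc : α * n ≤ c := by
      have h1 : α * n ≤ (Nat.ceil (α * n) : ℝ) := Nat.le_ceil _
      have h2 : (Nat.ceil (α * n) : ℝ) ≤ c := by exact_mod_cast hcard n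
      linarith
    have hc0 : 0 < (c:ℝ) := lt_of_lt_of_le (by positivity) hαc
    have hδ0 : 0 ≤ δ n := by
      have hne : S.Nonempty := Finset.card_pos.mp (by exact_mod_cast hc0)
      obtain ⟨k, hk⟩ := hne
      have hk' : lam n k ≤ δ n * lbar n := (Finset.mem_filter.mp hk).2
      have h0 : 0 ≤ δ n * lbar n := le_trans (hlam n k) hk'
      by_contra hcon
      push_neg at hcon
      have : δ n * lbar n < 0 := mul_neg_of_neg_of_pos hcon hL
      linarith
    have hcardTS : S.card + T.card = n := by
      rw [hS, hT, Finset.card_filter_add_card_filter_not]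
      simp
    have hTcard : (T.card : ℝ) = (n:ℝ) - c := by
      have : (S.card : ℝ) + (T.card : ℝ) = (n:ℝ) := by exact_mod_cast hcardTS
      linarith
    -- rewrite R n
    have hRe : R n = (n:ℝ)⁻¹ * ∑ k, Real.exp (a n - t n * lam n k) := by
      simp only [hR_def]
      simp only [mul_div_assoc, Finset.sum_div]
      congr 1
      refine Finset.sum_congr rfl fun k _ => ?_
      rw [← Real.exp_sub]
      congr 1
      rw [ha_n]
      ring
    have hsplit : ∑ k ∈ S, Real.exp (a n - t n * lam n k)
        + ∑ k ∈ T, Real.exp (a n - t n * lam n k)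
        = ∑ k, Real.exp (a n - t n * lam n k) :=
      Finset.sum_filter_add_sum_filter_not _ _ _
    -- bound on S
    have hSsum : (c:ℝ) * Real.exp ((1 - δ n) * a n)
        ≤ ∑ k ∈ S, Real.exp (a n - t n * lam n k) := by
      have := Finset.sum_le_sum (f := fun _ : Fin n => Real.exp ((1 - δ n) * a n))
        (g := fun k => Real.exp (a n - t n * lam n k)) (s := S)
        (fun k hk => by
          apply Real.exp_le_exp.mpr
          have hk' : lam n k ≤ δ n * lbar n := (Finset.mem_filter.mp hk).2
          have h1 : t n * lam n k ≤ t n * (δ n * lbar n) :=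
            mul_le_mul_of_nonneg_left hk' (ht n)
          have h2 : (1 - δ n) * (t n * lbar n)
              = t n * lbar n - t n * (δ n * lbar n) := by ring
          rw [ha_n, h2]
          linarith)
      simpa [Finset.sum_const, nsmul_eq_mul] using this
    -- sum of λ
    have hsumlam : ∑ k, lam n k = (n:ℝ) * lbar n := by
      rw [hlbar n]; field_simp
    have hTlam : ∑ k ∈ T, lam n k ≤ (n:ℝ) * lbar n := by
      rw [← hsumlam]
      exact Finset.sum_le_sum_of_subset_of_nonneg (Finset.subset_univ T)
        (fun k _ _ => hlam n k)
    -- bound on T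
    have hTnn : 0 ≤ ∑ k ∈ T, Real.exp (a n - t n * lam n k) :=
      Finset.sum_nonneg fun k _ => (Real.exp_pos _).le
    have hrest : ((n:ℝ) - c) * (1 + a n) - (n:ℝ) * a n
        ≤ ∑ k ∈ T, Real.exp (a n - t n * lam n k) := by
      have h1 : ∑ k ∈ T, (1 + (a n - t n * lam n k))
          ≤ ∑ k ∈ T, Real.exp (a n - t n * lam n k) :=
        Finset.sum_le_sum fun k _ => by
          have := Real.add_one_le_exp (a n - t n * lam n k)
          linarith
      have h2 : ∑ k ∈ T, (1 + (a n - t n * lam n k))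
          = (T.card : ℝ) * (1 + a n) - t n * ∑ k ∈ T, lam n k := by
        calc ∑ k ∈ T, (1 + (a n - t n * lam n k))
            = ∑ k ∈ T, ((1 + a n) - t n * lam n k) :=
              Finset.sum_congr rfl (fun k _ => by ring)
          _ = ∑ _k ∈ T, (1 + a n) - ∑ k ∈ T, t n * lam n k := Finset.sum_sub_distrib _ _
          _ = (T.card : ℝ) * (1 + a n) - t n * ∑ k ∈ T, lam n k := by
              rw [Finset.sum_const, nsmul_eq_mul, ← Finset.mul_sum]
      have h3 : t n * ∑ k ∈ T, lam n k ≤ (n:ℝ) * a n := by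
        have h4 : t n * ∑ k ∈ T, lam n k ≤ t n * ((n:ℝ) * lbar n) :=
          mul_le_mul_of_nonneg_left hTlam (ht n)
        have h5 : t n * ((n:ℝ) * lbar n) = (n:ℝ) * (t n * lbar n) := by ring
        rw [ha_n]
        linarith
      rw [h2, hTcard] at h1
      linarith
    -- (1-δ)a ≥ a/2 ≥ 0
    have hu : a n / 2 ≤ (1 - δ n) * a n := by
      have hp : 0 ≤ (1/2 - δ n) * a n := mul_nonneg (by linarith) ha0
      have hq : (1 - δ n) * a n = a n / 2 + (1/2 - δ n) * a n := by ring
      linarith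
    -- part (i)
    have he1 : Real.exp (a n / 2) ≤ Real.exp ((1 - δ n) * a n) :=
      Real.exp_le_exp.mpr hu
    have hi : α * Real.exp (a n / 2) ≤ R n := by
      rw [hRe]
      have h3 : (c:ℝ) * Real.exp ((1 - δ n) * a n)
          ≤ ∑ k, Real.exp (a n - t n * lam n k) := by
        rw [← hsplit]; linarith
      have h4 : (n:ℝ) * (α * Real.exp (a n / 2)) ≤ (c:ℝ) * Real.exp ((1 - δ n) * a n) := by
        have h5 : α * (n:ℝ) * Real.exp (a n / 2) ≤ (c:ℝ) * Real.exp ((1 - δ n) * a n) :=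
          mul_le_mul hαc he1 (Real.exp_pos _).le hc0.le
        have h6 : (n:ℝ) * (α * Real.exp (a n / 2))
            = α * (n:ℝ) * Real.exp (a n / 2) := by ring
        linarith
      calc α * Real.exp (a n / 2)
          = (n:ℝ)⁻¹ * ((n:ℝ) * (α * Real.exp (a n / 2))) := by field_simp
        _ ≤ (n:ℝ)⁻¹ * ∑ k, Real.exp (a n - t n * lam n k) :=
            mul_le_mul_of_nonneg_left (h4.trans h3) (by positivity)
    -- part (ii)
    have hq : 1 + (1 - δ n) * a n + (a n)^2/16 ≤ Real.exp ((1 - δ n) * a n) :=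
      stmt10_aux_exp _ _ ha0 hu
    have hii : 1 + α * (a n)^2 / 16 - δ n * a n ≤ R n := by
      rw [hRe]
      have h7 : (n:ℝ) + (c:ℝ) * (a n)^2/16 - (c:ℝ) * (δ n * a n)
          ≤ ∑ k, Real.exp (a n - t n * lam n k) := by
        have h8 := mul_le_mul_of_nonneg_left hq hc0.le
        rw [← hsplit]
        linarith [hSsum, hrest, h8]
      have h9 : (n:ℝ) * (1 + α * (a n)^2 / 16 - δ n * a n)
          ≤ (n:ℝ) + (c:ℝ) * (a n)^2/16 - (c:ℝ) * (δ n * a n) := by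
        have p1 : α * (n:ℝ) * (a n)^2 ≤ (c:ℝ) * (a n)^2 :=
          mul_le_mul_of_nonneg_right hαc (sq_nonneg _)
        have p2 : (c:ℝ) * (δ n * a n) ≤ (n:ℝ) * (δ n * a n) :=
          mul_le_mul_of_nonneg_right hcn (mul_nonneg hδ0 ha0)
        linarith [p1, p2]
      calc 1 + α * (a n)^2 / 16 - δ n * a n
          = (n:ℝ)⁻¹ * ((n:ℝ) * (1 + α * (a n)^2 / 16 - δ n * a n)) := by field_simp
        _ ≤ (n:ℝ)⁻¹ * ∑ k, Real.exp (a n - t n * lam n k) :=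
            mul_le_mul_of_nonneg_left (h9.trans h7) (by positivity)
    exact ⟨ha0, hδ0, hi, hii⟩
  -- global part
  set M : ℝ := 2 * (2/α - 1) with hM
  have hM0 : 0 ≤ M := by
    have h1 : 2 * α < 2 * 1 := by linarith
    have h2 : (2:ℝ) < 2/α := by
      rw [lt_div_iff₀ hα0]; linarith
    rw [hM]; linarith
  have E1 : ∀ᶠ n in Filter.atTop, δ n ≤ 1/2 :=
    hδ.eventually (eventually_le_nhds (by norm_num))
  have E2 : ∀ᶠ n in Filter.atTop, R n ≤ 2 :=
    hconv.eventually (eventually_le_nhds one_lt_two)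
  have EaM : ∀ᶠ n in Filter.atTop, a n ≤ M := by
    filter_upwards [E1, E2, Filter.eventually_ge_atTop 1] with n h1 h2 h3
    obtain ⟨ha0, hδ0, hi, -⟩ := key n h3 h1
    have he : α * Real.exp (a n / 2) ≤ 2 := le_trans hi h2
    have h4 : Real.exp (a n / 2) ≤ 2/α := by
      rw [le_div_iff₀ hα0]; linarith [mul_comm (Real.exp (a n / 2)) α]
    have h5 := Real.add_one_le_exp (a n / 2)
    rw [hM]; linarith
  have Eb : ∀ᶠ n in Filter.atTop,
      (a n)^2 ≤ 16/α * ((R n - 1) + δ n * M) := by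
    filter_upwards [E1, EaM, Filter.eventually_ge_atTop 1] with n h1 hM' h3
    obtain ⟨ha0, hδ0, -, hii⟩ := key n h3 h1
    have h5 : α * (a n)^2 / 16 ≤ (R n - 1) + δ n * M := by
      have h6 : δ n * a n ≤ δ n * M := mul_le_mul_of_nonneg_left hM' hδ0
      linarith
    calc (a n)^2 = 16/α * (α * (a n)^2 / 16) := by field_simp
      _ ≤ 16/α * ((R n - 1) + δ n * M) :=
          mul_le_mul_of_nonneg_left h5 (by positivity)
  have hg : Filter.Tendsto (fun n => 16/α * ((R n - 1) + δ n * M))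
      Filter.atTop (nhds 0) := by
    have h1 : Filter.Tendsto (fun n => (R n - 1) + δ n * M) Filter.atTop
        (nhds ((1 - 1) + 0 * M)) :=
      (hconv.sub tendsto_const_nhds).add (hδ.mul_const M)
    have h2 := h1.const_mul (16/α)
    simpa using h2
  have hsq : Filter.Tendsto (fun n => Real.sqrt (16/α * ((R n - 1) + δ n * M)))
      Filter.atTop (nhds 0) := by
    have h1 := hg.sqrt
    simpa using h1
  have h0le : ∀ᶠ n in Filter.atTop, 0 ≤ a n := by
    filter_upwards [E1, Filter.eventually_ge_atTop 1] with n h1 h3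
    exact (key n h3 h1).1
  have hle : ∀ᶠ n in Filter.atTop,
      a n ≤ Real.sqrt (16/α * ((R n - 1) + δ n * M)) := by
    filter_upwards [Eb, h0le] with n hb h0
    calc a n = Real.sqrt ((a n)^2) := by rw [Real.sqrt_sq h0]
      _ ≤ _ := Real.sqrt_le_sqrt hb
  exact squeeze_zero' h0le hle hsq
end
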